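/- Let a, b, c, d, e be integers with a ≠ 0 and d ≠ 0, and let K be a field of characteristic zero. For every nonzero T ∈ K one has the identity a^2 T^4 (f(T)^2 + g(dT/a)^2) = (T+a)^2 (T+c)^2 (a^2 T^4 + 2a^2 b T^3 + (a^2 b^2 + d^2) T^2 + 2ade T + a^2 e^2), where f(x) = (x+a)(x+b)(x+c)/x and g(y) = (y+d)(y+e)(y + cd/a)/y^2. -/

import Mathlib

set_option maxHeartbeats 1000000

/-- The identity `a^2 T^4 (f(T)^2 + g(dT/a)^2) = (T+a)^2 (T+c)^2 (a^2 T^4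
+ 2a^2 b T^3 + (a^2 b^2 + d^2) T^2 + 2ade T + a^2 e^2)` from the proof of
Theorem 1.4 of Zhang–Zargar. -/
theorem stmt13 (a b c d e : ℤ) (ha : a ≠ 0) (hd : d ≠ 0)
    (K : Type*) [Field K] [CharZero K] (T : K) (hT : T ≠ 0) :
    (a : K) ^ 2 * T ^ 4 *
        (((T + a) * (T + b) * (T + c) / T) ^ 2
          + ((d * T / a + d) * (d * T / a + e) * (d * T / a + c * d / a)
              / (d * T / a) ^ 2) ^ 2) =
      (T + a) ^ 2 * (T + c) ^ 2 *
        (a ^ 2 * T ^ 4 + 2 * a ^ 2 * b * T ^ 3 + (a ^ 2 * b ^ 2 + d ^ 2) * T ^ 2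
          + 2 * a * d * e * T + a ^ 2 * e ^ 2) := by
  have ha' : (a : K) ≠ 0 := Int.cast_ne_zero.mpr ha
  have hd' : (d : K) ≠ 0 := Int.cast_ne_zero.mpr hd
  have h1 : ((d : K) * T / a + d) * (d * T / a + e) * (d * T / a + c * d / a)
      / ((d : K) * T / a) ^ 2
      = (T + a) * (d * T + a * e) * (T + c) / (a * T ^ 2) := by
    rw [div_eq_div_iff (pow_ne_zero 2 (div_ne_zero (mul_ne_zero hd' hT) ha')) (by
      exact mul_ne_zero ha' (pow_ne_zero 2 hT))]
    field_simp
  rw [h1]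
  field_simp
  ring
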